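/- Let A and B be closed subsets of a complete metric space X and let x̄ ∈ A ∩ B. Then A and B have property (T) at x̄ if and only if A and B are subtransversal at x̄. -/

import Mathlib

open Metric Set
open scoped ENNReal

section EkelandAux

open Filter
open scoped Topology

/-- An Ekeland-type variational principle on a closed subset of a complete metric space,
for a continuous nonnegative function. -/
lemma ekeland_aux {Y : Type*} [MetricSpace Y] [CompleteSpace Y] {S : Set Y} (hS : IsClosed S)
    {f : Y → ℝ} (hf : Continuous f) (hf0 : ∀ y ∈ S, 0 ≤ f y)
    {y₀ : Y} (hy₀ : y₀ ∈ S) {σ : ℝ} (hσ : 0 < σ) :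
    ∃ y ∈ S, f y ≤ f y₀ ∧ σ * dist y₀ y ≤ f y₀ - f y ∧
      ∀ z ∈ S, f y ≤ f z + σ * dist y z := by
  classical
  set m : Y → ℝ := fun y => sInf (f '' {z | z ∈ S ∧ f z + σ * dist y z ≤ f y}) with hm
  have hTmem : ∀ y ∈ S, y ∈ {z | z ∈ S ∧ f z + σ * dist y z ≤ f y} := by
    intro y hy; simp [hy]
  have hbdd : ∀ y : Y, BddBelow (f '' {z | z ∈ S ∧ f z + σ * dist y z ≤ f y}) := by
    intro y
    exact ⟨0, by rintro v ⟨z, hz, rfl⟩; exact hf0 z hz.1⟩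
  have hmle : ∀ y ∈ S, m y ≤ f y := by
    intro y hy
    exact csInf_le (hbdd y) ⟨y, hTmem y hy, rfl⟩
  have key : ∀ y, y ∈ S → ∃ z, z ∈ S ∧ f z + σ * dist y z ≤ f y ∧ 2 * f z ≤ f y + m y := by
    intro y hy
    rcases eq_or_lt_of_le (hmle y hy) with h | h
    · exact ⟨y, hy, by simp, by nlinarith⟩
    · have hlt : m y < (f y + m y) / 2 := by linarith
      have hne : (f '' {z | z ∈ S ∧ f z + σ * dist y z ≤ f y}).Nonempty :=
        ⟨f y, y, hTmem y hy, rfl⟩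
      obtain ⟨v, ⟨z, hz, rfl⟩, hv⟩ := exists_lt_of_csInf_lt hne hlt
      exact ⟨z, hz.1, hz.2, by linarith⟩
  choose! g hgS hgd hgm using key
  set u : ℕ → Y := fun n => g^[n] y₀ with hu
  have husucc : ∀ n, u (n + 1) = g (u n) := by
    intro n; simp [hu, Function.iterate_succ_apply']
  have huS : ∀ n, u n ∈ S := by
    intro n; induction n with
    | zero => exact hy₀
    | succ k ih => rw [husucc]; exact hgS _ ih
  have hdec : ∀ n, f (u (n + 1)) + σ * dist (u n) (u (n + 1)) ≤ f (u n) := by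
    intro n; rw [husucc]; exact hgd _ (huS n)
  have hmono : ∀ n, f (u (n + 1)) ≤ f (u n) := by
    intro n
    have := hdec n
    nlinarith [dist_nonneg (x := u n) (y := u (n + 1))]
  have hanti : Antitone (fun n => f (u n)) := antitone_nat_of_succ_le hmono
  have hchain : ∀ n k, n ≤ k → σ * dist (u n) (u k) ≤ f (u n) - f (u k) := by
    intro n k hnk
    induction k, hnk using Nat.le_induction with
    | base => simp
    | succ k hnk ih =>
      have h1 := hdec k
      have h2 := dist_triangle (u n) (u k) (u (k + 1))
      nlinarith
  have hbdd2 : BddBelow (Set.range fun n => f (u n)) :=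
    ⟨0, by rintro v ⟨n, rfl⟩; exact hf0 _ (huS n)⟩
  have htend : Tendsto (fun n => f (u n)) atTop (𝓝 (⨅ n, f (u n))) :=
    tendsto_atTop_ciInf hanti hbdd2
  set L := ⨅ n, f (u n) with hL
  have hLle : ∀ n, L ≤ f (u n) := fun n => ciInf_le hbdd2 n
  have hcauchy : CauchySeq u := by
    rw [Metric.cauchySeq_iff']
    intro ε hε
    obtain ⟨N, hN⟩ :=
      (htend.eventually_lt_const (by nlinarith : L < L + σ * ε)).exists_forall_of_atTop
    refine ⟨N, fun n hn => ?_⟩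
    have h1 := hchain N n hn
    have h2 := hLle n
    have h3 := hN N le_rfl
    rw [dist_comm]
    nlinarith
  obtain ⟨y, hy⟩ := cauchySeq_tendsto_of_complete hcauchy
  have hyS : y ∈ S := hS.mem_of_tendsto hy (Eventually.of_forall huS)
  have hfy : Tendsto (fun n => f (u n)) atTop (𝓝 (f y)) := (hf.tendsto y).comp hy
  have hfyL : f y = L := tendsto_nhds_unique hfy htend
  have hfyle : ∀ n, f y ≤ f (u n) := by intro n; rw [hfyL]; exact hLle n
  refine ⟨y, hyS, hfyle 0, ?_, ?_⟩
  · have hd : Tendsto (fun n => σ * dist (u 0) (u n)) atTop (𝓝 (σ * dist y₀ y)) := by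
      have : Tendsto (fun n => dist (u 0) (u n)) atTop (𝓝 (dist y₀ y)) :=
        (Continuous.tendsto (continuous_const.dist continuous_id) y).comp hy
      exact this.const_mul σ
    have hr : Tendsto (fun n => f (u 0) - f (u n)) atTop (𝓝 (f y₀ - f y)) :=
      tendsto_const_nhds.sub hfy
    exact le_of_tendsto_of_tendsto' hd hr (fun n => hchain 0 n (Nat.zero_le n))
  · intro z hz
    by_contra hcon
    push_neg at hcon
    have hlt : Tendsto (fun n => f z + σ * dist (u n) z) atTop (𝓝 (f z + σ * dist y z)) := by
      have : Tendsto (fun n => dist (u n) z) atTop (𝓝 (dist y z)) :=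
        (Continuous.tendsto (continuous_id.dist continuous_const) y).comp hy
      exact tendsto_const_nhds.add (this.const_mul σ)
    have hev : ∀ᶠ n in atTop, f z + σ * dist (u n) z < f y := hlt.eventually_lt_const hcon
    have hkey : ∀ᶠ n in atTop, 2 * f y - f (u n) ≤ f z := by
      filter_upwards [hev] with n hn
      have hzT : f z ∈ f '' {w | w ∈ S ∧ f w + σ * dist (u n) w ≤ f (u n)} :=
        ⟨z, ⟨hz, le_trans hn.le (hfyle n)⟩, rfl⟩
      have h1 : m (u n) ≤ f z := csInf_le (hbdd _) hzT
      have h2 : 2 * f (u (n + 1)) ≤ f (u n) + m (u n) := by rw [husucc]; exact hgm _ (huS n)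
      have h3 := hfyle (n + 1)
      linarith
    have h4 : Tendsto (fun n => 2 * f y - f (u n)) atTop (𝓝 (2 * f y - f y)) :=
      tendsto_const_nhds.sub hfy
    have h5 : f y ≤ f z := by
      have := le_of_tendsto_of_tendsto h4 tendsto_const_nhds hkey
      linarith
    have h6 := dist_nonneg (x := y) (y := z)
    nlinarith

end EkelandAux

/-- Property (T) of closed sets `A`, `B` at a point `x0` with constants `δ > 0`, `M > 0`. -/
def PropT {X : Type*} [MetricSpace X] (A B : Set X) (x0 : X) (δ M : ℝ) : Prop :=
  (A ∩ Metric.ball x0 (δ / (2 * (1 + 2 * M)))).Nonempty ∧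
  (B ∩ Metric.ball x0 (δ / (2 * (1 + 2 * M)))).Nonempty ∧
  ∀ xA ∈ A ∩ Metric.closedBall x0 δ, ∀ xB ∈ B ∩ Metric.closedBall x0 δ, xA ≠ xB →
    ∃ θ > 0, ∃ xA' ∈ A, ∃ xB' ∈ B,
      dist xA xA' ≤ θ * M ∧ dist xB xB' ≤ θ * M ∧ dist xA' xB' ≤ dist xA xB - θ

/-- Subtransversality of closed sets `A`, `B` at a point `x0 ∈ A ∩ B`. -/
def Subtrans {X : Type*} [MetricSpace X] (A B : Set X) (x0 : X) : Prop :=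
  ∃ K > 0, ∃ δ > 0, ∀ x ∈ Metric.ball x0 δ,
    EMetric.infEdist x (A ∩ B) ≤
      ENNReal.ofReal K * (EMetric.infEdist x A + EMetric.infEdist x B)

set_option maxHeartbeats 1000000 in
theorem stmt3 {X : Type*} [MetricSpace X] [CompleteSpace X]
    {A B : Set X} (hA : IsClosed A) (hB : IsClosed B) {xbar : X} (hx : xbar ∈ A ∩ B) :
    (∃ δ > 0, ∃ M > 0, PropT A B xbar δ M) ↔ Subtrans A B xbar := by
  constructor
  · rintro ⟨δ, hδ, M, hM, hne1, hne2, hT⟩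
    refine ⟨1 + 2 * M, by positivity, δ / (4 * (1 + 3 * M)), by positivity, ?_⟩
    intro x hxball
    set ρ := δ / (4 * (1 + 3 * M)) with hρdef
    have hρpos : 0 < ρ := by positivity
    have hρδ : ρ * (4 * (1 + 3 * M)) = δ := div_mul_cancel₀ _ (by positivity)
    clear_value ρ
    rw [mem_ball] at hxball
    have hABne : (A ∩ B).Nonempty := ⟨xbar, hx⟩
    have hAne : A.Nonempty := ⟨xbar, hx.1⟩
    have hBne : B.Nonempty := ⟨xbar, hx.2⟩
    have eA : EMetric.infEdist x A = ENNReal.ofReal (infDist x A) := by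
      rw [infDist, ENNReal.ofReal_toReal (infEdist_ne_top hAne)]; rfl
    have eB : EMetric.infEdist x B = ENNReal.ofReal (infDist x B) := by
      rw [infDist, ENNReal.ofReal_toReal (infEdist_ne_top hBne)]; rfl
    have eAB : EMetric.infEdist x (A ∩ B) = ENNReal.ofReal (infDist x (A ∩ B)) := by
      rw [infDist, ENNReal.ofReal_toReal (infEdist_ne_top hABne)]; rfl
    rw [eA, eB, eAB, ← ENNReal.ofReal_add infDist_nonneg infDist_nonneg,
        ← ENNReal.ofReal_mul (by positivity)]
    refine ENNReal.ofReal_le_ofReal ?_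
    set a := infDist x A with ha
    set b := infDist x B with hb
    clear_value a b
    have ha0 : 0 ≤ a := by rw [ha]; exact infDist_nonneg
    have hb0 : 0 ≤ b := by rw [hb]; exact infDist_nonneg
    have haρ : a < ρ := by
      rw [ha]; exact lt_of_le_of_lt (infDist_le_dist_of_mem hx.1) hxball
    have hbρ : b < ρ := by
      rw [hb]; exact lt_of_le_of_lt (infDist_le_dist_of_mem hx.2) hxball
    refine le_of_forall_pos_le_add ?_
    intro ε hε
    have hεpos' : 0 < min (ε / (1 + 4 * M)) (δ / (4 * (1 + 6 * M))) := by positivity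
    set ε' := min (ε / (1 + 4 * M)) (δ / (4 * (1 + 6 * M))) with hε'def
    clear_value ε'
    have hε'ε : ε' * (1 + 4 * M) ≤ ε := by
      have h : ε' ≤ ε / (1 + 4 * M) := by rw [hε'def]; exact min_le_left _ _
      calc ε' * (1 + 4 * M) ≤ (ε / (1 + 4 * M)) * (1 + 4 * M) :=
            mul_le_mul_of_nonneg_right h (by positivity)
        _ = ε := div_mul_cancel₀ _ (by positivity)
    have hε'δ : ε' * (4 * (1 + 6 * M)) ≤ δ := by
      have h : ε' ≤ δ / (4 * (1 + 6 * M)) := by rw [hε'def]; exact min_le_right _ _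
      calc ε' * (4 * (1 + 6 * M)) ≤ (δ / (4 * (1 + 6 * M))) * (4 * (1 + 6 * M)) :=
            mul_le_mul_of_nonneg_right h (by positivity)
        _ = δ := div_mul_cancel₀ _ (by positivity)
    obtain ⟨xA, hxA, hdxA'⟩ := (infDist_lt_iff hAne).1 (by rw [← ha]; linarith : infDist x A < a + ε')
    obtain ⟨xB, hxB, hdxB'⟩ := (infDist_lt_iff hBne).1 (by rw [← hb]; linarith : infDist x B < b + ε')
    have hdxA : dist x xA < a + ε' := hdxA'
    have hdxB : dist x xB < b + ε' := hdxB'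
    by_cases hne : xA = xB
    · subst hne
      have hle : infDist x (A ∩ B) ≤ dist x xA := infDist_le_dist_of_mem ⟨hxA, hxB⟩
      nlinarith
    · set S : Set (X × X) := (A ∩ closedBall xbar δ) ×ˢ (B ∩ closedBall xbar δ) with hSdef
      have hScl : IsClosed S := (hA.inter isClosed_closedBall).prod (hB.inter isClosed_closedBall)
      have hσ : (0 : ℝ) < 1 / (2 * M) := by positivity
      have hxAxbar : dist xA xbar < a + ε' + ρ := by
        have h := dist_triangle xA x xbar
        rw [dist_comm xA x] at h
        linarith
      have hxBxbar : dist xB xbar < b + ε' + ρ := by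
        have h := dist_triangle xB x xbar
        rw [dist_comm xB x] at h
        linarith
      have hy₀S : (xA, xB) ∈ S := by
        refine ⟨⟨hxA, mem_closedBall.2 ?_⟩, ⟨hxB, mem_closedBall.2 ?_⟩⟩ <;> nlinarith
      obtain ⟨⟨uA, uB⟩, huS, hfle, hmove, hvar⟩ :=
        ekeland_aux hScl (continuous_dist (α := X)) (fun y _ => dist_nonneg) hy₀S hσ
      clear_value S
      rw [hSdef, Set.mem_prod] at huS
      obtain ⟨⟨huAA, huAball⟩, huBB, huBball⟩ := huS
      dsimp only at hfle hmove hvar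
      set t₀ := dist xA xB with ht₀
      clear_value t₀
      have ht₀pos : 0 < t₀ := by rw [ht₀]; exact dist_pos.2 hne
      have ht₀lt : t₀ < ρ + ρ + (ε' + ε') := by
        have h := dist_triangle xA x xB
        rw [dist_comm xA x] at h
        nlinarith
      have hfnn : (0 : ℝ) ≤ dist uA uB := dist_nonneg
      have hmax : dist ((xA, xB) : X × X) (uA, uB) = max (dist xA uA) (dist xB uB) :=
        Prod.dist_eq
      have hmove' : dist ((xA, xB) : X × X) (uA, uB) ≤ 2 * M * t₀ := by
        have heq : dist ((xA, xB) : X × X) (uA, uB) =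
            (1 / (2 * M) * dist ((xA, xB) : X × X) (uA, uB)) * (2 * M) := by
          field_simp
        rw [heq]
        calc (1 / (2 * M) * dist ((xA, xB) : X × X) (uA, uB)) * (2 * M)
            ≤ (t₀ - dist uA uB) * (2 * M) :=
              mul_le_mul_of_nonneg_right hmove (by positivity)
          _ ≤ 2 * M * t₀ := by nlinarith
      have hdxAuA : dist xA uA ≤ 2 * M * t₀ :=
        le_trans (by rw [hmax]; exact le_max_left _ _) hmove'
      have hdxBuB : dist xB uB ≤ 2 * M * t₀ :=
        le_trans (by rw [hmax]; exact le_max_right _ _) hmove'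
      have hMt : M * t₀ ≤ M * (ρ + ρ + (ε' + ε')) :=
        mul_le_mul_of_nonneg_left ht₀lt.le hM.le
      have huu : uA = uB := by
        by_contra hneu
        obtain ⟨θ, hθ, xA', hxA', xB', hxB', hmA, hmB, hdrop⟩ :=
          hT uA ⟨huAA, huAball⟩ uB ⟨huBB, huBball⟩ hneu
        have hθt : θ ≤ dist uA uB := by
          have hd := dist_nonneg (x := xA') (y := xB'); linarith
        have hθt₀ : θ ≤ t₀ := le_trans hθt hfle
        have hθM : θ * M ≤ M * t₀ := by nlinarith
        have hzS : (xA', xB') ∈ S := by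
          rw [hSdef, Set.mem_prod]
          refine ⟨⟨hxA', mem_closedBall.2 ?_⟩, ⟨hxB', mem_closedBall.2 ?_⟩⟩
          · have h1 := dist_triangle xA' uA xbar
            have h2 := dist_triangle uA xA xbar
            rw [dist_comm xA' uA] at h1
            rw [dist_comm uA xA] at h2
            nlinarith
          · have h1 := dist_triangle xB' uB xbar
            have h2 := dist_triangle uB xB xbar
            rw [dist_comm xB' uB] at h1
            rw [dist_comm uB xB] at h2
            nlinarith
        have hz := hvar (xA', xB') hzS
        dsimp only at hz
        have hdz : dist ((uA, uB) : X × X) (xA', xB') ≤ θ * M := by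
          rw [Prod.dist_eq]; exact max_le hmA hmB
        have hσdz : (1 / (2 * M)) * dist ((uA, uB) : X × X) (xA', xB') ≤ θ / 2 := by
          calc (1 / (2 * M)) * dist ((uA, uB) : X × X) (xA', xB')
              ≤ (1 / (2 * M)) * (θ * M) := mul_le_mul_of_nonneg_left hdz (by positivity)
            _ = θ / 2 := by field_simp
        have hd2 := dist_nonneg (x := ((uA, uB) : X × X)) (y := (xA', xB'))
        nlinarith
      subst huu
      have hle : infDist x (A ∩ B) ≤ dist x uA := infDist_le_dist_of_mem ⟨huAA, huBB⟩
      have htri : dist x uA ≤ dist x xA + dist xA uA := dist_triangle x xA uA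
      have ht₀ab : t₀ ≤ a + b + (ε' + ε') := by
        have h := dist_triangle xA x xB
        rw [dist_comm xA x] at h
        rw [ht₀]
        linarith
      nlinarith [mul_le_mul_of_nonneg_left ht₀ab (by linarith : (0:ℝ) ≤ 2 * M)]
  · rintro ⟨K, hK, δ, hδ, hsub⟩
    refine ⟨δ / 2, by positivity, K + 2, by positivity,
      ⟨xbar, hx.1, mem_ball_self (by positivity)⟩,
      ⟨xbar, hx.2, mem_ball_self (by positivity)⟩, ?_⟩
    rintro xA ⟨hxA, hxAb⟩ xB ⟨hxB, hxBb⟩ hne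
    have ht : 0 < dist xA xB := dist_pos.2 hne
    have hball : xA ∈ ball xbar δ := by
      rw [mem_closedBall] at hxAb; rw [mem_ball]; linarith
    have h1 := hsub xA hball
    rw [show EMetric.infEdist xA A = 0 from EMetric.infEdist_zero_of_mem hxA, zero_add] at h1
    have h4 : EMetric.infEdist xA (A ∩ B) < ENNReal.ofReal ((K + 1) * dist xA xB) := by
      calc EMetric.infEdist xA (A ∩ B)
          ≤ ENNReal.ofReal K * EMetric.infEdist xA B := h1
        _ ≤ ENNReal.ofReal K * edist xA xB :=
            mul_le_mul_right (EMetric.infEdist_le_edist_of_mem hxB) _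
        _ = ENNReal.ofReal (K * dist xA xB) := by
            rw [edist_dist, ← ENNReal.ofReal_mul hK.le]
        _ < ENNReal.ofReal ((K + 1) * dist xA xB) := by
            apply (ENNReal.ofReal_lt_ofReal_iff_of_nonneg (by positivity)).2
            nlinarith
    obtain ⟨w, hw, hew⟩ := EMetric.infEdist_lt_iff.1 h4
    rw [edist_lt_ofReal] at hew
    refine ⟨dist xA xB, ht, w, hw.1, w, hw.2, ?_, ?_, by simp⟩
    · nlinarith
    · have htri := dist_triangle xB xA w
      rw [dist_comm xB xA] at htri
      nlinarith
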